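/- The closed Y-frieze pattern of width n obtained by placing the tuple (1,2,…,n) along a north-west to south-east diagonal and performing horizontal knitting has all entries in its nonzero rows positive integers. -/

import Mathlib

/-- Entry of the "fan" Conway–Coxeter frieze pattern, for residues `p q`. -/
def Mf (p q : ℤ) : ℤ :=
  if p = q then 0 else if p = 0 ∨ q = 0 then 1 else if p < q then q - p else p - q

lemma Mf_pos {p q : ℤ} (h : p ≠ q) : 0 < Mf p q := by
  unfold Mf; split_ifs <;> omega

lemma Mf_self (p : ℤ) : Mf p p = 0 := by simp [Mf]

lemma emod_ne {N a b : ℤ} (h1 : 1 ≤ b - a) (h2 : b - a ≤ N - 1) : a % N ≠ b % N := by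
  intro h
  have hd : N ∣ b - a := Int.ModEq.dvd h
  have := Int.le_of_dvd (by omega) hd
  omega

set_option maxHeartbeats 2000000 in
lemma Mrule {N p q : ℤ} (hN : 2 ≤ N) (hp0 : 0 ≤ p) (hpN : p < N) (hq0 : 0 ≤ q)
    (hqN : q < N) (hpq : p ≠ q) :
    Mf p q * Mf ((p + 1) % N) ((q + 1) % N)
      = 1 + Mf ((p + 1) % N) q * Mf p ((q + 1) % N) := by
  have hp' : (p + 1) % N = if p = N - 1 then 0 else p + 1 := by
    split_ifs with h
    · have hh : p + 1 = N := by omega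
      rw [hh, Int.emod_self]
    · exact Int.emod_eq_of_lt (by omega) (by omega)
  have hq' : (q + 1) % N = if q = N - 1 then 0 else q + 1 := by
    split_ifs with h
    · have hh : q + 1 = N := by omega
      rw [hh, Int.emod_self]
    · exact Int.emod_eq_of_lt (by omega) (by omega)
  rw [hp', hq']
  unfold Mf
  split_ifs <;> first | ring1 | omega | (subst_vars; first | ring1 | omega) | (exfalso; omega)

lemma Mstep {N : ℤ} (hN : 2 ≤ N) (a b : ℤ) (hab : a % N ≠ b % N) :
    Mf (a % N) (b % N) * Mf ((a + 1) % N) ((b + 1) % N)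
      = 1 + Mf ((a + 1) % N) (b % N) * Mf (a % N) ((b + 1) % N) := by
  have h0 : (0:ℤ) < N := by omega
  have h1 : (1:ℤ) % N = 1 := Int.emod_eq_of_lt (by norm_num) (by omega)
  have e1 : (a + 1) % N = (a % N + 1) % N := by rw [Int.add_emod, h1]
  have e2 : (b + 1) % N = (b % N + 1) % N := by rw [Int.add_emod, h1]
  rw [e1, e2]
  exact Mrule hN (Int.emod_nonneg a (by omega)) (Int.emod_lt_of_pos a h0)
    (Int.emod_nonneg b (by omega)) (Int.emod_lt_of_pos b h0) hab

/-- The explicit closed Y-frieze obtained from the tuple `(1,2,…,n)`. -/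
def bfz (n : ℕ) (i j : ℤ) : ℚ :=
  if 2 ≤ j - i ∧ j - i ≤ (n:ℤ) + 3
  then ((Mf (i % ((n:ℤ) + 3)) (j % ((n:ℤ) + 3))
        * Mf ((i + 1) % ((n:ℤ) + 3)) ((j - 1) % ((n:ℤ) + 3)) : ℤ) : ℚ)
  else if j - i = (n:ℤ) + 4 then -1 else 0

lemma bfz_in (n : ℕ) (i j : ℤ) (h1 : 2 ≤ j - i) (h2 : j - i ≤ (n:ℤ) + 3) :
    bfz n i j = ((Mf (i % ((n:ℤ) + 3)) (j % ((n:ℤ) + 3))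
        * Mf ((i + 1) % ((n:ℤ) + 3)) ((j - 1) % ((n:ℤ) + 3)) : ℤ) : ℚ) := by
  unfold bfz
  rw [if_pos ⟨h1, h2⟩]

lemma bfz_top (n : ℕ) (i : ℤ) : bfz n i (i + 2) = 0 := by
  rw [bfz_in n i (i + 2) (by omega) (by omega),
    show i + 2 - 1 = i + 1 from by ring, Mf_self, mul_zero]
  norm_num

lemma bfz_bot (n : ℕ) (i : ℤ) : bfz n i (i + (n:ℤ) + 3) = 0 := by
  rw [bfz_in n i (i + (n:ℤ) + 3) (by omega) (by omega),
    show i + (n:ℤ) + 3 = i + ((n:ℤ) + 3) * 1 from by ring, Int.add_mul_emod_self_left, Mf_self, zero_mul]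
  norm_num

lemma bfz_neg (n : ℕ) (i : ℤ) : bfz n i (i + (n:ℤ) + 4) = -1 := by
  unfold bfz
  rw [if_neg (by omega), if_pos (by omega)]

lemma bfz_out (n : ℕ) (i j : ℤ) (h : j - i ≤ 1 ∨ (n:ℤ) + 5 ≤ j - i) : bfz n i j = 0 := by
  unfold bfz
  rcases h with h | h
  · rw [if_neg (by omega), if_neg (by omega)]
  · rw [if_neg (by omega), if_neg (by omega)]

lemma bfz_pos (n : ℕ) (i : ℤ) (k : ℕ) (h1 : 1 ≤ k) (h2 : k ≤ n) :
    ∃ m : ℕ, 0 < m ∧ bfz n i (i + (k:ℤ) + 2) = (m : ℚ) := by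
  rw [bfz_in n i (i + (k:ℤ) + 2) (by omega) (by omega)]
  set N : ℤ := (n:ℤ) + 3 with hNdef
  have f1 : 0 < Mf (i % N) ((i + (k:ℤ) + 2) % N) :=
    Mf_pos (emod_ne (by omega) (by omega))
  have f2 : 0 < Mf ((i + 1) % N) ((i + (k:ℤ) + 2 - 1) % N) :=
    Mf_pos (emod_ne (by omega) (by omega))
  refine ⟨(Mf (i % N) ((i + (k:ℤ) + 2) % N)
      * Mf ((i + 1) % N) ((i + (k:ℤ) + 2 - 1) % N)).toNat, ?_, ?_⟩
  · have : 0 < Mf (i % N) ((i + (k:ℤ) + 2) % N)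
        * Mf ((i + 1) % N) ((i + (k:ℤ) + 2 - 1) % N) := mul_pos f1 f2
    omega
  · have hnn : (0:ℤ) ≤ Mf (i % N) ((i + (k:ℤ) + 2) % N)
        * Mf ((i + 1) % N) ((i + (k:ℤ) + 2 - 1) % N) := le_of_lt (mul_pos f1 f2)
    exact_mod_cast (Int.toNat_of_nonneg hnn).symm

lemma bfz_diag (n : ℕ) (k : ℕ) (h1 : 1 ≤ k) (h2 : k ≤ n) :
    bfz n 0 ((k:ℤ) + 2) = (k : ℚ) := by
  rw [bfz_in n 0 ((k:ℤ) + 2) (by omega) (by omega)]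
  set N : ℤ := (n:ℤ) + 3 with hNdef
  have e0 : (0:ℤ) % N = 0 := Int.zero_emod N
  have e1 : ((k:ℤ) + 2) % N = (k:ℤ) + 2 := Int.emod_eq_of_lt (by omega) (by omega)
  have e2 : ((0:ℤ) + 1) % N = 1 := Int.emod_eq_of_lt (by omega) (by omega)
  have e3 : ((k:ℤ) + 2 - 1) % N = (k:ℤ) + 1 := by
    rw [show (k:ℤ) + 2 - 1 = (k:ℤ) + 1 from by ring]
    exact Int.emod_eq_of_lt (by omega) (by omega)
  rw [e0, e1, e2, e3]
  unfold Mf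
  rw [if_neg (by omega), if_pos (Or.inl rfl), if_neg (by omega), if_neg (by omega),
    if_pos (by omega)]
  push_cast
  ring

lemma bfz_diamond (n : ℕ) (i j : ℤ) (h3 : 3 ≤ j - i) (h4 : j - i ≤ (n:ℤ) + 3) :
    bfz n i j * bfz n (i + 1) (j + 1) = (1 + bfz n (i + 1) j) * (1 + bfz n i (j + 1)) := by
  set N : ℤ := (n:ℤ) + 3 with hNdef
  have hN2 : (2:ℤ) ≤ N := by omega
  rcases eq_or_lt_of_le h4 with hlast | hlt
  · -- j - i = N : bottom diamond, uses the row of -1's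
    have hw : bfz n i j = 0 := by
      rw [bfz_in n i j (by omega) (by omega)]
      rw [show j = i + N * 1 from by omega, Int.add_mul_emod_self_left, Mf_self, zero_mul]
      norm_num
    have he : bfz n (i + 1) (j + 1) = 0 := by
      rw [bfz_in n (i + 1) (j + 1) (by omega) (by omega)]
      rw [show j + 1 = (i + 1) + N * 1 from by omega, Int.add_mul_emod_self_left, Mf_self, zero_mul]
      norm_num
    have hs : bfz n i (j + 1) = -1 := by
      rw [show j + 1 = i + (n:ℤ) + 4 from by omega]
      exact bfz_neg n i
    rw [hw, he, hs]
    ring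
  · rw [bfz_in n i j (by omega) (by omega),
      bfz_in n (i + 1) (j + 1) (by omega) (by omega),
      bfz_in n (i + 1) j (by omega) (by omega),
      bfz_in n i (j + 1) (by omega) (by omega)]
    rw [show i + 1 + 1 = i + 2 from by ring, show j + 1 - 1 = j from by ring]
    have r1 := Mstep hN2 (i + 1) (j - 1) (emod_ne (by omega) (by omega))
    rw [show i + 1 + 1 = i + 2 from by ring, show j - 1 + 1 = j from by ring] at r1
    have r2 := Mstep hN2 i j (emod_ne (by omega) (by omega))
    have hZ : (Mf (i % N) (j % N) * Mf ((i + 1) % N) ((j - 1) % N))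
        * (Mf ((i + 1) % N) ((j + 1) % N) * Mf ((i + 2) % N) (j % N))
        = (1 + Mf ((i + 1) % N) (j % N) * Mf ((i + 2) % N) ((j - 1) % N))
        * (1 + Mf (i % N) ((j + 1) % N) * Mf ((i + 1) % N) (j % N)) := by
      linear_combination (Mf ((i + 1) % N) ((j - 1) % N) * Mf ((i + 2) % N) (j % N)) * r2
        + (1 + Mf ((i + 1) % N) (j % N) * Mf (i % N) ((j + 1) % N)) * r1
    exact_mod_cast hZ

/-- A closed Y-frieze pattern of width `n`: a staggered array `b i j` (row `k`
consists of entries `b i (i+k+2)`) satisfying the Y-diamond rule, with zeroth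
row and `(n+1)`-th row of `0`s, a row of `-1`s below, nonzero intermediate
rows, and normalized to `0` outside the pattern. -/
structure ClosedYFrieze (n : ℕ) where
  b : ℤ → ℤ → ℚ
  diamond : ∀ i j : ℤ, 3 ≤ j - i → j - i ≤ (n : ℤ) + 3 →
    b i j * b (i + 1) (j + 1) = (1 + b (i + 1) j) * (1 + b i (j + 1))
  topZero : ∀ i : ℤ, b i (i + 2) = 0
  botZero : ∀ i : ℤ, b i (i + (n : ℤ) + 3) = 0
  negRow : ∀ i : ℤ, b i (i + (n : ℤ) + 4) = -1
  rowsNonzero : ∀ k : ℕ, 1 ≤ k → k ≤ n → ∃ i : ℤ, b i (i + (k : ℤ) + 2) ≠ 0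
  outside : ∀ i j : ℤ, j - i ≤ 1 ∨ (n : ℤ) + 5 ≤ j - i → b i j = 0

/-- All entries of the nonzero rows are positive rationals. -/
def ClosedYFrieze.Positive {n : ℕ} (P : ClosedYFrieze n) : Prop :=
  ∀ (i : ℤ) (k : ℕ), 1 ≤ k → k ≤ n → 0 < P.b i (i + (k : ℤ) + 2)

/-- All entries of the nonzero rows are positive integers. -/
def ClosedYFrieze.Arithmetic {n : ℕ} (P : ClosedYFrieze n) : Prop :=
  ∀ (i : ℤ) (k : ℕ), 1 ≤ k → k ≤ n → ∃ m : ℕ, 0 < m ∧ P.b i (i + (k : ℤ) + 2) = (m : ℚ)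

/-- The explicit frieze pattern as a `ClosedYFrieze`. -/
def myFrieze (n : ℕ) : ClosedYFrieze n where
  b := bfz n
  diamond := fun i j h3 h4 => bfz_diamond n i j h3 h4
  topZero := fun i => bfz_top n i
  botZero := fun i => bfz_bot n i
  negRow := fun i => bfz_neg n i
  rowsNonzero := by
    intro k h1 h2
    refine ⟨0, ?_⟩
    obtain ⟨m, hm, he⟩ := bfz_pos n 0 k h1 h2
    rw [he]
    exact Nat.cast_ne_zero.mpr (by omega)
  outside := fun i j h => bfz_out n i j h

lemma eastStep (n : ℕ) (P : ClosedYFrieze n) (hP : P.Positive) (i : ℤ)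
    (h : ∀ k : ℕ, 1 ≤ k → k ≤ n → P.b i (i + (k:ℤ) + 2) = bfz n i (i + (k:ℤ) + 2)) :
    ∀ k : ℕ, 1 ≤ k → k ≤ n →
      P.b (i + 1) ((i + 1) + (k:ℤ) + 2) = bfz n (i + 1) ((i + 1) + (k:ℤ) + 2) := by
  have key : ∀ t k : ℕ, 1 ≤ k → k ≤ n → k ≤ t →
      P.b (i + 1) ((i + 1) + (k:ℤ) + 2) = bfz n (i + 1) ((i + 1) + (k:ℤ) + 2) := by
    intro t
    induction t with
    | zero => intro k h1 _ h3; omega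
    | succ t ih =>
      intro k h1 h2 h3
      have hNterm : P.b (i + 1) (i + (k:ℤ) + 2) = bfz n (i + 1) (i + (k:ℤ) + 2) := by
        rcases Nat.eq_or_lt_of_le h1 with h1' | h1'
        · rw [show i + (k:ℤ) + 2 = (i + 1) + 2 from by omega]
          rw [P.topZero (i + 1), bfz_top n (i + 1)]
        · have hh := ih (k - 1) (by omega) (by omega) (by omega)
          rw [show (((k:ℕ) - 1 : ℕ):ℤ) = (k:ℤ) - 1 from by omega] at hh
          rw [show i + (k:ℤ) + 2 = (i + 1) + ((k:ℤ) - 1) + 2 from by ring]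
          exact hh
      have hSterm : P.b i (i + (k:ℤ) + 3) = bfz n i (i + (k:ℤ) + 3) := by
        rcases Nat.eq_or_lt_of_le h2 with h2' | h2'
        · rw [show i + (k:ℤ) + 3 = i + (n:ℤ) + 3 from by omega]
          rw [P.botZero i, bfz_bot n i]
        · have hh := h (k + 1) (by omega) (by omega)
          rw [show (((k:ℕ) + 1 : ℕ):ℤ) = (k:ℤ) + 1 from by push_cast; ring] at hh
          rw [show i + (k:ℤ) + 3 = i + ((k:ℤ) + 1) + 2 from by ring]
          exact hh
      have hW := h k h1 h2
      have hWpos : (0:ℚ) < P.b i (i + (k:ℤ) + 2) := hP i k h1 h2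
      have d1 := P.diamond i (i + (k:ℤ) + 2) (by omega) (by omega)
      have d2 := bfz_diamond n i (i + (k:ℤ) + 2) (by omega) (by omega)
      rw [show i + (k:ℤ) + 2 + 1 = i + (k:ℤ) + 3 from by ring] at d1 d2
      rw [hW, hNterm, hSterm] at d1
      have hWne : bfz n i (i + (k:ℤ) + 2) ≠ 0 := by rw [← hW]; exact ne_of_gt hWpos
      have hc := mul_left_cancel₀ hWne (d1.trans d2.symm)
      rw [show (i + 1) + (k:ℤ) + 2 = i + (k:ℤ) + 3 from by ring]
      exact hc
  intro k h1 h2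
  exact key k k h1 h2 le_rfl

lemma westStep (n : ℕ) (P : ClosedYFrieze n) (hP : P.Positive) (i : ℤ)
    (h : ∀ k : ℕ, 1 ≤ k → k ≤ n → P.b i (i + (k:ℤ) + 2) = bfz n i (i + (k:ℤ) + 2)) :
    ∀ k : ℕ, 1 ≤ k → k ≤ n →
      P.b (i - 1) ((i - 1) + (k:ℤ) + 2) = bfz n (i - 1) ((i - 1) + (k:ℤ) + 2) := by
  have key : ∀ d m : ℕ, n - m = d → 1 ≤ m → m ≤ n →
      P.b (i - 1) ((i - 1) + (m:ℤ) + 2) = bfz n (i - 1) ((i - 1) + (m:ℤ) + 2) := by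
    intro d
    induction d using Nat.strong_induction_on with
    | _ d ih =>
      intro m hd h1 h2
      have hSterm : P.b (i - 1) (i + (m:ℤ) + 2) = bfz n (i - 1) (i + (m:ℤ) + 2) := by
        rcases eq_or_lt_of_le h2 with h2' | h2'
        · rw [show i + (m:ℤ) + 2 = (i - 1) + (n:ℤ) + 3 from by omega]
          rw [P.botZero (i - 1), bfz_bot n (i - 1)]
        · have hh := ih (n - (m + 1)) (by omega) (m + 1) rfl (by omega) (by omega)
          rw [show (((m:ℕ) + 1 : ℕ):ℤ) = (m:ℤ) + 1 from by push_cast; ring] at hh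
          rw [show i + (m:ℤ) + 2 = (i - 1) + ((m:ℤ) + 1) + 2 from by ring]
          exact hh
      have hNterm : P.b i (i + (m:ℤ) + 1) = bfz n i (i + (m:ℤ) + 1) := by
        rcases Nat.eq_or_lt_of_le h1 with h1' | h1'
        · rw [show i + (m:ℤ) + 1 = i + 2 from by omega]
          rw [P.topZero i, bfz_top n i]
        · have hh := h (m - 1) (by omega) (by omega)
          rw [show (((m:ℕ) - 1 : ℕ):ℤ) = (m:ℤ) - 1 from by omega] at hh
          rw [show i + (m:ℤ) + 1 = i + ((m:ℤ) - 1) + 2 from by ring]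
          exact hh
      have hE := h m h1 h2
      have hEpos : (0:ℚ) < P.b i (i + (m:ℤ) + 2) := hP i m h1 h2
      have d1 := P.diamond (i - 1) (i + (m:ℤ) + 1) (by omega) (by omega)
      have d2 := bfz_diamond n (i - 1) (i + (m:ℤ) + 1) (by omega) (by omega)
      rw [show i - 1 + 1 = i from by ring, show i + (m:ℤ) + 1 + 1 = i + (m:ℤ) + 2 from by ring]
        at d1 d2
      rw [hE, hNterm, hSterm] at d1
      have hEne : bfz n i (i + (m:ℤ) + 2) ≠ 0 := by rw [← hE]; exact ne_of_gt hEpos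
      have hc := mul_right_cancel₀ hEne (d1.trans d2.symm)
      rw [show (i - 1) + (m:ℤ) + 2 = i + (m:ℤ) + 1 from by ring]
      exact hc
  intro k h1 h2
  exact key (n - k) k rfl h1 h2

lemma agree (n : ℕ) (P : ClosedYFrieze n) (hP : P.Positive)
    (hd : ∀ k : ℕ, 1 ≤ k → k ≤ n → P.b 0 ((k:ℤ) + 2) = (k : ℚ)) :
    ∀ i : ℤ, ∀ k : ℕ, 1 ≤ k → k ≤ n →
      P.b i (i + (k:ℤ) + 2) = bfz n i (i + (k:ℤ) + 2) := by
  intro i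
  induction i using Int.induction_on with
  | zero =>
    intro k h1 h2
    rw [show (0:ℤ) + (k:ℤ) + 2 = (k:ℤ) + 2 from by ring]
    rw [hd k h1 h2, bfz_diag n k h1 h2]
  | succ i ih => exact eastStep n P hP (i:ℤ) ih
  | pred i ih => exact westStep n P hP (-(i:ℤ)) ih

/-- The closed Y-frieze pattern of width `n` obtained by horizontal knitting from
the tuple `(1,2,…,n)` placed along a north-west to south-east diagonal (so the
entry of row `k` on the diagonal through position `0` equals `k`) exists and is
arithmetic: all entries of its nonzero rows are positive integers. -/
theorem stmt8 (n : ℕ) (hn : 1 ≤ n) :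
    (∃ P : ClosedYFrieze n, P.Positive ∧
      ∀ k : ℕ, 1 ≤ k → k ≤ n → P.b 0 ((k : ℤ) + 2) = (k : ℚ)) ∧
    (∀ P : ClosedYFrieze n, P.Positive →
      (∀ k : ℕ, 1 ≤ k → k ≤ n → P.b 0 ((k : ℤ) + 2) = (k : ℚ)) → P.Arithmetic) := by
  constructor
  · refine ⟨myFrieze n, ?_, ?_⟩
    · intro i k h1 h2
      obtain ⟨m, hm, he⟩ := bfz_pos n i k h1 h2
      show (0:ℚ) < bfz n i (i + (k:ℤ) + 2)
      rw [he]
      exact_mod_cast hm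
    · intro k h1 h2
      exact bfz_diag n k h1 h2
  · intro P hPos hdiag
    intro i k h1 h2
    obtain ⟨m, hm, he⟩ := bfz_pos n i k h1 h2
    exact ⟨m, hm, by rw [agree n P hPos hdiag i k h1 h2, he]⟩
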